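/- If f : Γ₊ → ℝ is convex, symmetric, homogeneous of degree one, strictly increasing, and normalized with f(1,…,1) = 1, then its dual f_*(z) = f(z₁⁻¹,…,zₙ⁻¹)⁻¹ satisfies f_*(z) ≤ n·(z₁⁻¹ + ⋯ + zₙ⁻¹)⁻¹ for all z ∈ Γ₊; consequently f_* tends to zero as z approaches the boundary of Γ₊ (i.e. as min zᵢ → 0 with z bounded). -/

import Mathlib

noncomputable section

/-- The positive cone Γ₊ = {x ∈ ℝⁿ : xᵢ > 0}. -/
def PosCone (n : ℕ) : Set (Fin n → ℝ) := {x | ∀ i, 0 < x i}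

/-- The dual function f_*(z) = f(z₁⁻¹,…,zₙ⁻¹)⁻¹. -/
def dualFn {n : ℕ} (f : (Fin n → ℝ) → ℝ) : (Fin n → ℝ) → ℝ :=
  fun z => (f fun i => (z i)⁻¹)⁻¹

/-- For f convex, symmetric, homogeneous of degree one, strictly increasing, normalized,
the dual f_* is bounded by the harmonic mean n(∑ zᵢ⁻¹)⁻¹, and consequently f_* tends
to zero as z approaches the boundary of Γ₊ within bounded sets. -/
theorem convex_dual_harmonic_bound_and_boundary_vanishing
    {n : ℕ} (f : (Fin n → ℝ) → ℝ)
    (hconv : ConvexOn ℝ (PosCone n) f)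
    (hsymm : ∀ σ : Equiv.Perm (Fin n), ∀ x, f (x ∘ σ) = f x)
    (hhomog : ∀ k : ℝ, 0 < k → ∀ x, f (k • x) = k * f x)
    (hmono : ∀ x ∈ PosCone n, ∀ y ∈ PosCone n,
      (∀ i, x i ≤ y i) → (∃ i, x i < y i) → f x < f y)
    (hnorm : f (fun _ => 1) = 1) :
    (∀ z ∈ PosCone n, dualFn f z ≤ (n : ℝ) * (∑ i, (z i)⁻¹)⁻¹) ∧
    (∀ ε > (0 : ℝ), ∀ M > (0 : ℝ), ∃ δ > (0 : ℝ), ∀ z ∈ PosCone n,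
      (∀ i, z i ≤ M) → (∃ i, z i < δ) → dualFn f z < ε) := by
  -- dispose of n = 0 via homogeneity contradiction
  rcases Nat.eq_zero_or_pos n with rfl | hn
  · exfalso
    have h2 := hhomog 2 (by norm_num) (fun _ => 1)
    have he : (2 : ℝ) • (fun _ => (1:ℝ) : Fin 0 → ℝ) = fun _ => 1 := by
      funext i; exact i.elim0
    rw [he, hnorm] at h2
    norm_num at h2
  have hnR : (0:ℝ) < n := by exact_mod_cast hn
  -- key lemma: f x ≥ (∑ x)/n on the cone
  have key : ∀ x ∈ PosCone n, (∑ i, x i) / n ≤ f x := by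
    intro x hx
    set c : ℝ := (Fintype.card (Equiv.Perm (Fin n)) : ℝ) with hc
    have hcpos : (0:ℝ) < c := by
      rw [hc]
      exact_mod_cast Fintype.card_pos (α := Equiv.Perm (Fin n))
    set w : Equiv.Perm (Fin n) → ℝ := fun _ => c⁻¹ with hw
    have hw1 : ∑ σ : Equiv.Perm (Fin n), w σ = 1 := by
      simp [hw, Finset.sum_const, Finset.card_univ]; rw [← hc]; exact mul_inv_cancel₀ hcpos.ne'
    have hjen := hconv.map_sum_le (t := Finset.univ)
      (fun σ _ => by positivity) hw1
      (fun σ _ => (fun i => hx (σ i) : (x ∘ σ) ∈ PosCone n))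
    have hrhs : ∑ σ : Equiv.Perm (Fin n), w σ * f (fun i => x (σ i)) = f x := by
      simp only [show ∀ σ : Equiv.Perm (Fin n), f (fun i => x (σ i)) = f x from fun σ => hsymm σ x]
      rw [← Finset.sum_mul, hw1, one_mul]
    -- the averaged point is the constant vector (∑ x)/n
    have hS : ∀ i j : Fin n, (∑ σ : Equiv.Perm (Fin n), x (σ i)) = ∑ σ : Equiv.Perm (Fin n), x (σ j) := by
      intro i j
      exact Fintype.sum_equiv (Equiv.mulRight (Equiv.swap i j))
        _ _ (fun σ => by simp [Equiv.Perm.mul_apply])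
    have htot : ∀ i : Fin n, (n : ℝ) * (∑ σ : Equiv.Perm (Fin n), x (σ i)) = c * ∑ j, x j := by
      intro i
      have : ∑ j : Fin n, (∑ σ : Equiv.Perm (Fin n), x (σ j)) = ∑ σ : Equiv.Perm (Fin n), ∑ j, x (σ j) := Finset.sum_comm
      have h2 : ∑ j : Fin n, (∑ σ : Equiv.Perm (Fin n), x (σ j)) = (n : ℝ) * ∑ σ : Equiv.Perm (Fin n), x (σ i) := by
        rw [Finset.sum_congr rfl (fun j _ => (hS j i))]
        simp [Finset.sum_const, Finset.card_univ, nsmul_eq_mul]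
      rw [← h2, this]
      have h3 : ∀ σ : Equiv.Perm (Fin n), ∑ j, x (σ j) = ∑ j, x j := fun σ => Equiv.sum_comp σ x
      rw [Finset.sum_congr rfl (fun σ _ => h3 σ)]
      simp [Finset.sum_const, Finset.card_univ, nsmul_eq_mul, hc]
    simp only [smul_eq_mul] at hjen
    have hpt : (∑ σ : Equiv.Perm (Fin n), w σ • fun i => x (σ i)) = fun _ => (∑ j, x j) / n := by
      funext i
      rw [Finset.sum_apply]
      simp only [Pi.smul_apply, Function.comp_apply, hw, smul_eq_mul]
      rw [← Finset.mul_sum]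
      have := htot i
      field_simp
      nlinarith [htot i]
    rw [hpt, hrhs] at hjen
    calc (∑ i, x i) / n = f (fun _ => (∑ j, x j) / n) := by
          have hcc : (0:ℝ) < (∑ j, x j) / n := by
            have : (0:ℝ) < ∑ j, x j :=
              Finset.sum_pos (fun i _ => hx i) (by simp [Finset.univ_nonempty_iff]; exact Fin.pos_iff_nonempty.mp hn)
            positivity
          have := hhomog _ hcc (fun _ => 1)
          have he : ((∑ j, x j) / n) • (fun _ => (1:ℝ) : Fin n → ℝ) = fun _ => (∑ j, x j) / n := by
            funext i; simp
          rw [he, hnorm, mul_one] at this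
          exact this.symm
      _ ≤ f x := hjen
  -- positivity of f on the cone
  have hfpos : ∀ x ∈ PosCone n, 0 < f x := by
    intro x hx
    refine lt_of_lt_of_le ?_ (key x hx)
    have : (0:ℝ) < ∑ i, x i :=
      Finset.sum_pos (fun i _ => hx i) (by simp [Finset.univ_nonempty_iff]; exact Fin.pos_iff_nonempty.mp hn)
    positivity
  have bound : ∀ z ∈ PosCone n, dualFn f z ≤ (n : ℝ) * (∑ i, (z i)⁻¹)⁻¹ := by
    intro z hz
    have hxmem : (fun i => (z i)⁻¹) ∈ PosCone n := fun i => by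
      have := hz i; positivity
    have hk := key _ hxmem
    have hfp := hfpos _ hxmem
    have hsum : (0:ℝ) < ∑ i, (z i)⁻¹ :=
      Finset.sum_pos (fun i _ => hxmem i) (by simp [Finset.univ_nonempty_iff]; exact Fin.pos_iff_nonempty.mp hn)
    have h1 : dualFn f z ≤ ((∑ i, (z i)⁻¹) / n)⁻¹ := by
      unfold dualFn
      exact inv_anti₀ (by positivity) hk
    calc dualFn f z ≤ ((∑ i, (z i)⁻¹) / n)⁻¹ := h1
      _ = (n : ℝ) * (∑ i, (z i)⁻¹)⁻¹ := by field_simp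
  refine ⟨bound, ?_⟩
  intro ε hε M hM
  refine ⟨ε / n, by positivity, ?_⟩
  rintro z hz hzM ⟨j, hj⟩
  have hsum : (0:ℝ) < ∑ i, (z i)⁻¹ :=
    Finset.sum_pos (fun i _ => by have := hz i; positivity)
      (by simp [Finset.univ_nonempty_iff]; exact Fin.pos_iff_nonempty.mp hn)
  have hle : (z j)⁻¹ ≤ ∑ i, (z i)⁻¹ :=
    Finset.single_le_sum (f := fun i => (z i)⁻¹) (fun i _ => by have := hz i; positivity) (Finset.mem_univ j)
  have hjpos := hz j
  have hinv : (∑ i, (z i)⁻¹)⁻¹ ≤ z j := by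
    rw [← inv_inv (z j)]
    exact inv_anti₀ (by positivity) hle
  calc dualFn f z ≤ (n : ℝ) * (∑ i, (z i)⁻¹)⁻¹ := bound z hz
    _ ≤ (n : ℝ) * z j := by nlinarith
    _ < (n : ℝ) * (ε / n) := by nlinarith
    _ = ε := by field_simp
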